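/- For every θ = (α, β₁, β₂, σ_ε²) ∈ ℝ × ℝ × ℝ × (0,∞), almost surely (1/n) log R_n(θ) → −h₂(θ) as n → ∞, where h₂(α,β₁,β₂,σ_ε²) = (1/2) log(σ_ε²/σ₀²) + σ₀²/(2σ_ε²) + E_X[(η₀(X) − α − β₁X − β₂X²)²]/(2σ_ε²) − 1/2. -/

import Mathlib

open MeasureTheory Filter Finset ProbabilityTheory

open MeasureTheory Filter Finset ProbabilityTheory Real
open scoped NNReal ENNReal

lemma integrable_sq_exp_neg_mul_sq {b : ℝ} (hb : 0 < b) :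
    Integrable fun x : ℝ => x ^ 2 * Real.exp (-b * x ^ 2) := by
  have h := integrable_rpow_mul_exp_neg_mul_sq hb (s := 2) (by norm_num)
  have : (fun x : ℝ => x ^ (2:ℝ) * Real.exp (-b * x ^ 2))
      = fun x : ℝ => x ^ 2 * Real.exp (-b * x ^ 2) := by
    funext x
    rw [show (2:ℝ) = ((2:ℕ):ℝ) by norm_num, Real.rpow_natCast]
  rwa [this] at h

lemma integral_sq_exp_neg_mul_sq {b : ℝ} (hb : 0 < b) :
    ∫ x : ℝ, x ^ 2 * Real.exp (-b * x ^ 2) = Real.sqrt (π / b) / (2 * b) := by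
  set f : ℝ → ℝ := fun x => x * Real.exp (-b * x ^ 2) with hf
  set f' : ℝ → ℝ := fun x => Real.exp (-b * x ^ 2) - 2 * b * (x ^ 2 * Real.exp (-b * x ^ 2))
    with hf'
  have hderiv : ∀ x : ℝ, HasDerivAt f (f' x) x := by
    intro x
    have h1 : HasDerivAt (fun x : ℝ => Real.exp (-b * x ^ 2))
        (Real.exp (-b * x ^ 2) * (-b * (2 * x))) x := by
      exact (((hasDerivAt_pow 2 x).const_mul (-b)).exp).congr_deriv (by
        simp [Nat.cast_ofNat])
    have h2 := (hasDerivAt_id x).mul h1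
    convert h2 using 1
    · rfl
    · rfl
    · funext y; rfl
    simp only [f', id_eq, one_mul]
    ring
  have hint' : Integrable f' :=
    (integrable_exp_neg_mul_sq hb).sub ((integrable_sq_exp_neg_mul_sq hb).const_mul _)
  have hint : Integrable f := integrable_mul_exp_neg_mul_sq hb
  have h0 : ∫ x, f' x = 0 := integral_eq_zero_of_hasDerivAt_of_integrable hderiv hint' hint
  have hsplit : ∫ x, f' x
      = (∫ x, Real.exp (-b * x ^ 2)) - 2 * b * ∫ x, x ^ 2 * Real.exp (-b * x ^ 2) := by
    rw [show f' = fun x => Real.exp (-b * x ^ 2)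
        - 2 * b * (x ^ 2 * Real.exp (-b * x ^ 2)) from rfl]
    rw [integral_sub (integrable_exp_neg_mul_sq hb)
      ((integrable_sq_exp_neg_mul_sq hb).const_mul _), integral_const_mul]
  rw [h0, integral_gaussian] at hsplit
  have hb2 : (2 : ℝ) * b ≠ 0 := by positivity
  field_simp at hsplit ⊢
  linarith


lemma gaussianReal_eq_withDensity {v : ℝ≥0} (hv : v ≠ 0) (μ : ℝ) :
    gaussianReal μ v = volume.withDensity
      (fun x => ((gaussianPDFReal μ v x).toNNReal : ℝ≥0∞)) := by
  rw [gaussianReal_of_var_ne_zero μ hv]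
  rfl

lemma integral_gaussianReal_eq {v : ℝ≥0} (hv : v ≠ 0) (μ : ℝ) (g : ℝ → ℝ) :
    ∫ x, g x ∂(gaussianReal μ v) = ∫ x, gaussianPDFReal μ v x * g x := by
  rw [gaussianReal_eq_withDensity hv,
    integral_withDensity_eq_integral_smul (measurable_gaussianPDFReal μ v).real_toNNReal g]
  congr 1
  funext x
  rw [NNReal.smul_def, smul_eq_mul, Real.coe_toNNReal _ (gaussianPDFReal_nonneg μ v x)]

lemma integrable_gaussianReal_iff {v : ℝ≥0} (hv : v ≠ 0) (μ : ℝ) (g : ℝ → ℝ) :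
    Integrable g (gaussianReal μ v) ↔
      Integrable (fun x => gaussianPDFReal μ v x * g x) volume := by
  rw [gaussianReal_eq_withDensity hv,
    integrable_withDensity_iff_integrable_smul (measurable_gaussianPDFReal μ v).real_toNNReal]
  constructor <;> intro h <;> refine h.congr (Filter.Eventually.of_forall fun x => ?_) <;>
    simp [NNReal.smul_def, Real.coe_toNNReal _ (gaussianPDFReal_nonneg μ v x)]

lemma gaussian_pdf_exp_eq {v : ℝ≥0} (hv : v ≠ 0) (t : ℝ) :
    (fun x => gaussianPDFReal 0 v x * Real.exp (t * x))
      = fun x => Real.exp (t ^ 2 * v / 2) * gaussianPDFReal (t * v) v x := by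
  have hv' : (v : ℝ) ≠ 0 := by exact_mod_cast hv
  have hvpos : (0:ℝ) < v := lt_of_le_of_ne v.coe_nonneg (Ne.symm hv')
  funext x
  simp only [gaussianPDFReal]
  rw [mul_assoc, ← Real.exp_add, mul_left_comm, ← Real.exp_add]
  congr 1
  field_simp
  ring

lemma gaussian_exp_integrable (v : ℝ≥0) (hv : v ≠ 0) (t : ℝ) :
    Integrable (fun x : ℝ => Real.exp (t * x)) (gaussianReal 0 v) := by
  rw [integrable_gaussianReal_iff hv, gaussian_pdf_exp_eq hv t]
  exact (integrable_gaussianPDFReal (t * v) v).const_mul _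

lemma gaussian_mgf (v : ℝ≥0) (hv : v ≠ 0) (t : ℝ) :
    ∫ x, Real.exp (t * x) ∂(gaussianReal 0 v) = Real.exp (t ^ 2 * v / 2) := by
  rw [integral_gaussianReal_eq hv]
  rw [show (fun x => gaussianPDFReal 0 v x * Real.exp (t * x))
    = fun x => Real.exp (t ^ 2 * v / 2) * gaussianPDFReal (t * v) v x
    from gaussian_pdf_exp_eq hv t]
  rw [integral_const_mul, integral_gaussianPDFReal_eq_one (t * v) hv, mul_one]

lemma gaussian_sq_integrable (v : ℝ≥0) (hv : v ≠ 0) :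
    Integrable (fun x : ℝ => x ^ 2) (gaussianReal 0 v) := by
  have hvpos : (0:ℝ) < v := lt_of_le_of_ne v.coe_nonneg (by exact_mod_cast (Ne.symm hv))
  rw [integrable_gaussianReal_iff hv]
  have hb : (0:ℝ) < (2 * (v:ℝ))⁻¹ := by positivity
  have := ((integrable_sq_exp_neg_mul_sq hb).const_mul ((√(2 * π * v))⁻¹))
  refine this.congr (Filter.Eventually.of_forall fun x => ?_)
  simp only [gaussianPDFReal]
  rw [show -(2 * (v:ℝ))⁻¹ * x ^ 2 = - (x - 0) ^ 2 / (2 * v) by field_simp; ring]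
  ring

lemma gaussian_sq_integral (v : ℝ≥0) (hv : v ≠ 0) :
    ∫ x, x ^ 2 ∂(gaussianReal 0 v) = v := by
  have hvpos : (0:ℝ) < v := lt_of_le_of_ne v.coe_nonneg (by exact_mod_cast (Ne.symm hv))
  rw [integral_gaussianReal_eq hv]
  have hb : (0:ℝ) < (2 * (v:ℝ))⁻¹ := by positivity
  have h1 : ∫ x : ℝ, gaussianPDFReal 0 v x * x ^ 2
      = (√(2 * π * v))⁻¹ * ∫ x : ℝ, x ^ 2 * Real.exp (-(2 * (v:ℝ))⁻¹ * x ^ 2) := by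
    rw [← integral_const_mul]
    congr 1
    funext x
    simp only [gaussianPDFReal]
    rw [show -(2 * (v:ℝ))⁻¹ * x ^ 2 = - (x - 0) ^ 2 / (2 * v) by field_simp; ring]
    ring
  rw [h1, integral_sq_exp_neg_mul_sq hb]
  have h2 : π / ((2 * (v:ℝ))⁻¹) = 2 * π * v := by field_simp
  rw [h2]
  have h3 : (0:ℝ) < 2 * π * v := by positivity
  have h4 : √(2 * π * v) ≠ 0 := by positivity
  field_simp

lemma cross_term_slln {Ω : Type*} [MeasurableSpace Ω] (P : Measure Ω) [IsProbabilityMeasure P]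
    (ε : ℕ → Ω → ℝ) (hεmeas : ∀ i, Measurable (ε i))
    (hεindep : iIndepFun ε P)
    (v₀ : ℝ≥0) (hv₀ : v₀ ≠ 0) (hεdist : ∀ i, P.map (ε i) = gaussianReal 0 v₀)
    (d : ℕ → ℝ) (D : ℝ) (hD : 0 < D) (hdle : ∀ i, |d i| ≤ D) :
    ∀ᵐ ω ∂P, Tendsto (fun n : ℕ => (1 / (n:ℝ)) * ∑ i ∈ Finset.Icc 1 n, d i * ε i ω)
      atTop (nhds 0) := by
  set X : ℕ → Ω → ℝ := fun i ω => d i * ε i ω with hX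
  have hXmeas : ∀ i, Measurable (X i) := fun i => (hεmeas i).const_mul (d i)
  have hXind : iIndepFun X P := by
    have := hεindep.comp (fun i => fun z : ℝ => d i * z)
      (fun i => measurable_id.const_mul (d i))
    exact this
  have hv₀pos : (0:ℝ) < v₀ := lt_of_le_of_ne v₀.coe_nonneg (by exact_mod_cast hv₀.symm)
  -- integrability of exponentials
  have int_X : ∀ (t : ℝ) (i : ℕ), Integrable (fun ω => Real.exp (t * X i ω)) P := by
    intro t i
    have h1 : Integrable (fun z : ℝ => Real.exp ((t * d i) * z)) (P.map (ε i)) := by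
      rw [hεdist i]; exact gaussian_exp_integrable v₀ hv₀ _
    have h2 := (integrable_map_measure
      (by rw [hεdist i]
          exact ((measurable_id.const_mul (t * d i)).exp).aestronglyMeasurable)
      (hεmeas i).aemeasurable).mp h1
    refine h2.congr (Filter.Eventually.of_forall fun ω => ?_)
    simp only [Function.comp_apply, hX]
    ring_nf
  -- mgf computation
  have mgf_X : ∀ (t : ℝ) (i : ℕ), mgf (X i) P t = Real.exp ((t * d i) ^ 2 * v₀ / 2) := by
    intro t i
    have h0 : mgf (X i) P t = ∫ ω, Real.exp ((t * d i) * ε i ω) ∂P := by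
      rw [mgf]
      congr 1
      funext ω
      simp only [hX]
      ring_nf
    have h1 : ∫ ω, Real.exp ((t * d i) * ε i ω) ∂P
        = ∫ z, Real.exp ((t * d i) * z) ∂(P.map (ε i)) :=
      (integral_map (hεmeas i).aemeasurable
        (((measurable_id.const_mul (t * d i)).exp).aestronglyMeasurable)).symm
    rw [h0, h1, hεdist i, gaussian_mgf v₀ hv₀]
  -- bound on mgf of the sum
  have mgf_sum_le : ∀ (t : ℝ) (n : ℕ),
      mgf (∑ i ∈ Finset.Icc 1 n, X i) P t ≤ Real.exp (t ^ 2 * D ^ 2 * v₀ / 2) ^ n := by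
    intro t n
    rw [hXind.mgf_sum hXmeas]
    calc ∏ i ∈ Finset.Icc 1 n, mgf (X i) P t
        ≤ ∏ i ∈ Finset.Icc 1 n, Real.exp (t ^ 2 * D ^ 2 * v₀ / 2) := by
          refine Finset.prod_le_prod (fun i _ => mgf_nonneg) (fun i _ => ?_)
          rw [mgf_X t i]
          apply Real.exp_le_exp.mpr
          have hd2 : (d i) ^ 2 ≤ D ^ 2 := by
            rw [← sq_abs]
            exact pow_le_pow_left₀ (abs_nonneg _) (hdle i) 2
          have : (t * d i) ^ 2 ≤ t ^ 2 * D ^ 2 := by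
            rw [mul_pow]
            exact mul_le_mul_of_nonneg_left hd2 (sq_nonneg t)
          have hv : (0:ℝ) ≤ v₀ := v₀.coe_nonneg
          nlinarith
      _ = Real.exp (t ^ 2 * D ^ 2 * v₀ / 2) ^ n := by
          rw [Finset.prod_const, Nat.card_Icc]
          norm_num
  -- the tail bound for fixed δ
  have tail : ∀ δ : ℝ, 0 < δ → ∀ n : ℕ,
      P {ω | δ * n ≤ |∑ i ∈ Finset.Icc 1 n, X i ω|}
        ≤ ENNReal.ofReal (2 * Real.exp (-(δ ^ 2 / (2 * D ^ 2 * v₀))) ^ n) := by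
    intro δ hδ n
    set t : ℝ := δ / (D ^ 2 * v₀) with ht
    have htpos : 0 < t := by positivity
    set c : ℝ := δ ^ 2 / (2 * D ^ 2 * v₀) with hc
    have hbound : ∀ s : ℝ, s = t ∨ s = -t →
        Real.exp (-s * (s/t * (δ * n))) * mgf (∑ i ∈ Finset.Icc 1 n, X i) P s
          ≤ Real.exp (-c) ^ n := by
      intro s hs
      have hs2 : s ^ 2 = t ^ 2 := by rcases hs with h | h <;> rw [h] <;> ring
      have hst : -s * (s/t * (δ * n)) = -(t * δ) * n := by
        rcases hs with h | h <;> rw [h] <;> field_simp <;> ring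
      calc Real.exp (-s * (s/t * (δ * n))) * mgf (∑ i ∈ Finset.Icc 1 n, X i) P s
          ≤ Real.exp (-(t * δ) * n) * Real.exp (s ^ 2 * D ^ 2 * v₀ / 2) ^ n := by
            rw [hst]
            exact mul_le_mul_of_nonneg_left (mgf_sum_le s n) (Real.exp_pos _).le
        _ = Real.exp (-c) ^ n := by
            rw [hs2, ← Real.exp_nat_mul, ← Real.exp_add, ← Real.exp_nat_mul]
            congr 1
            have hD2 : (D:ℝ) ^ 2 ≠ 0 := by positivity
            have hv : (v₀:ℝ) ≠ 0 := by positivity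
            rw [ht, hc]
            field_simp
            ring
    -- upper tail
    have hup : (P {ω | δ * n ≤ (∑ i ∈ Finset.Icc 1 n, X i) ω}).toReal
        ≤ Real.exp (-c) ^ n := by
      have := measure_ge_le_exp_mul_mgf (μ := P) (X := ∑ i ∈ Finset.Icc 1 n, X i)
        (t := t) (δ * n) htpos.le
        (by
          have := hXind.integrable_exp_mul_sum hXmeas
            (s := Finset.Icc 1 n) (fun i _ => int_X t i)
          exact this)
      refine this.trans ?_
      have := hbound t (Or.inl rfl)
      have htt : t / t * (δ * ↑n) = δ * ↑n := by field_simp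
      rw [htt] at this
      exact this
    -- lower tail
    have hlow : (P {ω | (∑ i ∈ Finset.Icc 1 n, X i) ω ≤ -(δ * n)}).toReal
        ≤ Real.exp (-c) ^ n := by
      have := measure_le_le_exp_mul_mgf (μ := P) (X := ∑ i ∈ Finset.Icc 1 n, X i)
        (t := -t) (-(δ * n)) (by linarith)
        (by
          have := hXind.integrable_exp_mul_sum hXmeas
            (s := Finset.Icc 1 n) (fun i _ => int_X (-t) i)
          exact this)
      refine this.trans ?_
      have h2 := hbound (-t) (Or.inr rfl)
      have htt : -t / t * (δ * ↑n) = -(δ * ↑n) := by field_simp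
      rw [htt] at h2
      exact h2
    -- combine
    have hsub : {ω | δ * n ≤ |∑ i ∈ Finset.Icc 1 n, X i ω|}
        ⊆ {ω | δ * n ≤ (∑ i ∈ Finset.Icc 1 n, X i) ω}
          ∪ {ω | (∑ i ∈ Finset.Icc 1 n, X i) ω ≤ -(δ * n)} := by
      intro ω hω
      simp only [Set.mem_setOf_eq, Finset.sum_apply, Set.mem_union] at hω ⊢
      rcases le_abs.mp hω with h | h
      · exact Or.inl h
      · exact Or.inr (by linarith)
    calc P {ω | δ * n ≤ |∑ i ∈ Finset.Icc 1 n, X i ω|}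
        ≤ P ({ω | δ * n ≤ (∑ i ∈ Finset.Icc 1 n, X i) ω}
            ∪ {ω | (∑ i ∈ Finset.Icc 1 n, X i) ω ≤ -(δ * n)}) := measure_mono hsub
      _ ≤ P {ω | δ * n ≤ (∑ i ∈ Finset.Icc 1 n, X i) ω}
          + P {ω | (∑ i ∈ Finset.Icc 1 n, X i) ω ≤ -(δ * n)} := measure_union_le _ _
      _ ≤ ENNReal.ofReal (Real.exp (-c) ^ n) + ENNReal.ofReal (Real.exp (-c) ^ n) := by
          gcongr
          · rw [← ENNReal.ofReal_toReal (measure_ne_top P _)]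
            exact ENNReal.ofReal_le_ofReal hup
          · rw [← ENNReal.ofReal_toReal (measure_ne_top P _)]
            exact ENNReal.ofReal_le_ofReal hlow
      _ = ENNReal.ofReal (2 * Real.exp (-c) ^ n) := by
          rw [← ENNReal.ofReal_add (by positivity) (by positivity)]
          congr 1
          ring
  -- Borel-Cantelli for each δ = 1/(k+1)
  have bc : ∀ k : ℕ, ∀ᵐ ω ∂P, ∀ᶠ n : ℕ in atTop,
      |∑ i ∈ Finset.Icc 1 n, X i ω| < (1 / ((k:ℝ) + 1)) * n := by
    intro k
    set δ : ℝ := 1 / ((k:ℝ) + 1) with hδdef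
    have hδ : 0 < δ := by positivity
    set c : ℝ := δ ^ 2 / (2 * D ^ 2 * v₀) with hc
    have hcpos : 0 < c := by positivity
    have hsummable : Summable (fun n : ℕ => 2 * Real.exp (-c) ^ n) :=
      (summable_geometric_of_lt_one (Real.exp_pos _).le
        (Real.exp_lt_one_iff.mpr (by linarith))).mul_left 2
    have htsum : (∑' n : ℕ, P {ω | δ * n ≤ |∑ i ∈ Finset.Icc 1 n, X i ω|}) ≠ ⊤ := by
      refine ne_top_of_le_ne_top ?_ (ENNReal.tsum_le_tsum (fun n => tail δ hδ n))
      rw [← ENNReal.ofReal_tsum_of_nonneg (fun n => by positivity) hsummable]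
      exact ENNReal.ofReal_ne_top
    have := measure_setOf_frequently_eq_zero (μ := P)
      (p := fun n ω => δ * n ≤ |∑ i ∈ Finset.Icc 1 n, X i ω|) htsum
    have hae : ∀ᵐ ω ∂P, ¬ ∃ᶠ n in atTop,
        δ * n ≤ |∑ i ∈ Finset.Icc 1 n, X i ω| := by
      rw [ae_iff]
      simpa only [not_not] using this
    filter_upwards [hae] with ω hω
    rw [Filter.not_frequently] at hω
    filter_upwards [hω] with n hn
    push_neg at hn
    simpa [hδdef, mul_comm] using hn
  rw [← ae_all_iff] at bc
  filter_upwards [bc] with ω hω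
  rw [NormedAddCommGroup.tendsto_nhds_zero]
  intro e he
  obtain ⟨k, hk⟩ := exists_nat_one_div_lt he
  filter_upwards [hω k, eventually_ge_atTop 1] with n hn hn1
  have hnpos : (0:ℝ) < n := by exact_mod_cast hn1
  have : |∑ i ∈ Finset.Icc 1 n, X i ω| / n < 1 / ((k:ℝ) + 1) := by
    rw [div_lt_iff₀ hnpos]
    calc |∑ i ∈ Finset.Icc 1 n, X i ω| < 1 / ((k:ℝ) + 1) * n := hn
      _ = 1 / ((k:ℝ) + 1) * n := rfl
  have hnorm : ‖(1 / (n:ℝ)) * ∑ i ∈ Finset.Icc 1 n, X i ω‖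
      = |∑ i ∈ Finset.Icc 1 n, X i ω| / n := by
    rw [Real.norm_eq_abs, abs_mul, abs_of_nonneg (by positivity : (0:ℝ) ≤ 1 / (n:ℝ))]
    ring
  rw [hnorm]
  exact this.trans hk

lemma sq_slln {Ω : Type*} [MeasurableSpace Ω] (P : Measure Ω) [IsProbabilityMeasure P]
    (ε : ℕ → Ω → ℝ) (hεmeas : ∀ i, Measurable (ε i))
    (hεindep : iIndepFun ε P)
    (v₀ : ℝ≥0) (hv₀ : v₀ ≠ 0) (hεdist : ∀ i, P.map (ε i) = gaussianReal 0 v₀) :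
    ∀ᵐ ω ∂P, Tendsto (fun n : ℕ => (1 / (n:ℝ)) * ∑ i ∈ Finset.Icc 1 n, (ε i ω) ^ 2)
      atTop (nhds (v₀ : ℝ)) := by
  set X : ℕ → Ω → ℝ := fun i ω => (ε (i + 1) ω) ^ 2 with hX
  have hsqmeas : Measurable (fun z : ℝ => z ^ 2) := measurable_id.pow_const 2
  have hint : Integrable (X 0) P := by
    have h1 : Integrable (fun z : ℝ => z ^ 2) (P.map (ε 1)) := by
      rw [hεdist 1]; exact gaussian_sq_integrable v₀ hv₀
    exact (integrable_map_measure
      (by rw [hεdist 1]; exact hsqmeas.aestronglyMeasurable)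
      (hεmeas 1).aemeasurable).mp h1
  have hindep : Pairwise (Function.onFun (IndepFun · · P) X) := by
    intro i j hij
    exact (hεindep.indepFun (show i + 1 ≠ j + 1 by omega)).comp hsqmeas hsqmeas
  have hident : ∀ i, IdentDistrib (X i) (X 0) P P := by
    intro i
    exact IdentDistrib.comp
      ⟨(hεmeas _).aemeasurable, (hεmeas _).aemeasurable, by rw [hεdist, hεdist]⟩ hsqmeas
  have hmean : P[X 0] = (v₀ : ℝ) := by
    have h1 : P[X 0] = ∫ z, z ^ 2 ∂(P.map (ε 1)) := by
      exact (integral_map (hεmeas 1).aemeasurable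
        (by rw [hεdist 1]; exact hsqmeas.aestronglyMeasurable)).symm
    rw [h1, hεdist 1, gaussian_sq_integral v₀ hv₀]
  have h := strong_law_ae_real X hint hindep hident
  rw [hmean] at h
  filter_upwards [h] with ω hω
  have heq : ∀ n : ℕ, (1 / (n:ℝ)) * ∑ i ∈ Finset.Icc 1 n, (ε i ω) ^ 2
      = (∑ i ∈ Finset.range n, X i ω) / n := by
    intro n
    rw [← Finset.Ico_add_one_right_eq_Icc, Finset.sum_Ico_eq_sum_range]
    simp only [Nat.add_sub_cancel, hX]
    rw [one_div, inv_mul_eq_div]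
    congr 1
    exact Finset.sum_congr rfl (fun i _ => by rw [add_comm])
  simpa only [heq] using hω

/-- The `N(μ, s)` density (with variance `s`) evaluated at `y`. -/
noncomputable def normalPdf (y μ s : ℝ) : ℝ :=
  (Real.sqrt (2 * Real.pi * s))⁻¹ * Real.exp (-((y - μ) ^ 2) / (2 * s))

/-- Expectation with respect to the uniform distribution on a set `𝒳 ⊆ ℝ`:
`E_X[g(X)] = |𝒳|⁻¹ ∫_𝒳 g(t) dt`. -/
noncomputable def EX (𝒳 : Set ℝ) (g : ℝ → ℝ) : ℝ :=
  (MeasureTheory.volume 𝒳).toReal⁻¹ * ∫ t in 𝒳, g t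

/-- The Kullback–Leibler divergence rate of the quadratic model from the truth:
`h₂(α,β₁,β₂,σ_ε²) = (1/2) log(σ_ε²/σ₀²) + σ₀²/(2σ_ε²)
  + E_X[(η₀(X)-α-β₁X-β₂X²)²]/(2σ_ε²) - 1/2`. -/
noncomputable def hQuad (𝒳 : Set ℝ) (η₀ : ℝ → ℝ) (s₀ α β₁ β₂ s : ℝ) : ℝ :=
  (1 / 2) * Real.log (s / s₀) + s₀ / (2 * s)
    + EX 𝒳 (fun t => (η₀ t - α - β₁ * t - β₂ * t ^ 2) ^ 2) / (2 * s) - 1 / 2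

/-- **Asymptotic equipartition for the forward quadratic regression model.**  The true
model is `y_i = η₀(x_i) + ε_i` with `ε_i` i.i.d. `N(0, σ₀²)`, the design `(x_i) ⊆ 𝒳`
(compact, of positive Lebesgue measure) satisfies the Riemann-sum condition, and the
quadratic model `M₂` has likelihood ratio
`R_n(θ) = ∏_{i=1}^n φ(y_i; α+β₁x_i+β₂x_i², σ_ε²)/φ(y_i; η₀(x_i), σ₀²)`.  Then for every
`θ = (α, β₁, β₂, σ_ε²)` with `σ_ε² > 0`, almost surely `(1/n) log R_n(θ) → -h₂(θ)`. -/
theorem quadratic_regression_equipartition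
    (𝒳 : Set ℝ) (hXmeas : MeasurableSet 𝒳) (hXcomp : IsCompact 𝒳)
    (hXvol : 0 < (volume 𝒳).toReal)
    (η₀ : ℝ → ℝ) (hη₀ : ContinuousOn η₀ 𝒳)
    (v₀ : NNReal) (hv₀ : 0 < v₀)
    (x : ℕ → ℝ) (hx : ∀ i, x i ∈ 𝒳)
    (hriemann : ∀ g : ℝ → ℝ, ContinuousOn g 𝒳 →
      Tendsto (fun n : ℕ => (1 / (n : ℝ)) * ∑ i ∈ Finset.Icc 1 n, g (x i)) atTop
        (nhds (EX 𝒳 g)))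
    {Ω : Type*} [MeasurableSpace Ω] (P : Measure Ω) [IsProbabilityMeasure P]
    (ε : ℕ → Ω → ℝ) (hεmeas : ∀ i, Measurable (ε i))
    (hεindep : iIndepFun ε P)
    (hεdist : ∀ i, P.map (ε i) = gaussianReal 0 v₀)
    (y : ℕ → Ω → ℝ) (hy : ∀ i ω, y i ω = η₀ (x i) + ε i ω) :
    ∀ α β₁ β₂ s : ℝ, 0 < s →
      ∀ᵐ ω ∂P, Tendsto
        (fun n : ℕ => (1 / (n : ℝ)) * Real.log (∏ i ∈ Finset.Icc 1 n,
          normalPdf (y i ω) (α + β₁ * x i + β₂ * x i ^ 2) s /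
            normalPdf (y i ω) (η₀ (x i)) (v₀ : ℝ)))
        atTop (nhds (-hQuad 𝒳 η₀ (v₀ : ℝ) α β₁ β₂ s)) := by
  intro α β₁ β₂ s hs
  have hv₀ne : v₀ ≠ 0 := hv₀.ne'
  have hv₀pos : (0:ℝ) < (v₀:ℝ) := by exact_mod_cast hv₀
  set d : ℕ → ℝ := fun i => η₀ (x i) - (α + β₁ * x i + β₂ * x i ^ 2) with hd
  -- continuity of the misfit
  have hgcont : ContinuousOn (fun t => η₀ t - α - β₁ * t - β₂ * t ^ 2) 𝒳 :=
    ((hη₀.sub continuousOn_const).sub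
      ((continuous_const.mul continuous_id).continuousOn)).sub
      ((continuous_const.mul (continuous_pow 2)).continuousOn)
  have hqcont : ContinuousOn (fun t => (η₀ t - α - β₁ * t - β₂ * t ^ 2) ^ 2) 𝒳 :=
    hgcont.pow 2
  -- a bound on the misfit at the design points
  obtain ⟨C, hC⟩ := hXcomp.exists_bound_of_continuousOn hgcont
  set D : ℝ := |C| + 1 with hD
  have hDpos : 0 < D := by positivity
  have hdle : ∀ i, |d i| ≤ D := by
    intro i
    have h1 := hC (x i) (hx i)
    rw [Real.norm_eq_abs] at h1
    have h2 : d i = η₀ (x i) - α - β₁ * x i - β₂ * x i ^ 2 := by rw [hd]; ring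
    rw [h2]
    calc |η₀ (x i) - α - β₁ * x i - β₂ * x i ^ 2| ≤ C := h1
      _ ≤ |C| + 1 := by
          have := le_abs_self C
          linarith
  -- the three convergence results
  have hA := hriemann (fun t => (η₀ t - α - β₁ * t - β₂ * t ^ 2) ^ 2) hqcont
  have hB := cross_term_slln P ε hεmeas hεindep v₀ hv₀ne hεdist d D hDpos hdle
  have hC2 := sq_slln P ε hεmeas hεindep v₀ hv₀ne hεdist
  filter_upwards [hB, hC2] with ω hBω hCω
  set c₀ : ℝ := Real.log ((Real.sqrt (2 * Real.pi * s))⁻¹)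
    - Real.log ((Real.sqrt (2 * Real.pi * (v₀:ℝ)))⁻¹) with hc₀def
  -- positivity of the densities
  have hpos1 : ∀ i, 0 < normalPdf (y i ω) (α + β₁ * x i + β₂ * x i ^ 2) s := by
    intro i
    unfold normalPdf
    have : (0:ℝ) < Real.sqrt (2 * Real.pi * s) := Real.sqrt_pos.mpr (by positivity)
    positivity
  have hpos2 : ∀ i, 0 < normalPdf (y i ω) (η₀ (x i)) (v₀:ℝ) := by
    intro i
    unfold normalPdf
    have : (0:ℝ) < Real.sqrt (2 * Real.pi * (v₀:ℝ)) := Real.sqrt_pos.mpr (by positivity)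
    positivity
  -- the per-term logarithmic identity
  have hterm : ∀ i, Real.log (normalPdf (y i ω) (α + β₁ * x i + β₂ * x i ^ 2) s /
      normalPdf (y i ω) (η₀ (x i)) (v₀:ℝ))
      = c₀ - (1 / (2*s)) * ((η₀ (x i) - α - β₁ * x i - β₂ * x i ^ 2) ^ 2)
        - (1/s) * (d i * ε i ω) + (1 / (2*(v₀:ℝ)) - 1 / (2*s)) * (ε i ω) ^ 2 := by
    intro i
    have h1 : y i ω - (α + β₁ * x i + β₂ * x i ^ 2) = ε i ω + d i := by
      rw [hy i ω, hd]; ring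
    have h2 : y i ω - η₀ (x i) = ε i ω := by rw [hy i ω]; ring
    rw [Real.log_div (hpos1 i).ne' (hpos2 i).ne']
    unfold normalPdf
    rw [Real.log_mul (by positivity) (Real.exp_pos _).ne',
      Real.log_mul (by positivity) (Real.exp_pos _).ne',
      Real.log_exp, Real.log_exp, h1, h2]
    have hε : ε i ω + d i = ε i ω + (η₀ (x i) - (α + β₁ * x i + β₂ * x i ^ 2)) := by rw [hd]
    rw [hc₀def, hd]
    field_simp
    ring
  -- convergence of the combined expression
  set An : ℕ → ℝ := fun n => (1 / (n:ℝ)) *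
    ∑ i ∈ Finset.Icc 1 n, (η₀ (x i) - α - β₁ * x i - β₂ * x i ^ 2) ^ 2 with hAn
  set Bn : ℕ → ℝ := fun n => (1 / (n:ℝ)) * ∑ i ∈ Finset.Icc 1 n, d i * ε i ω with hBn
  set Cn : ℕ → ℝ := fun n => (1 / (n:ℝ)) * ∑ i ∈ Finset.Icc 1 n, (ε i ω) ^ 2 with hCn
  have hF : Tendsto (fun n : ℕ => c₀ - (1 / (2*s)) * An n - (1/s) * Bn n
      + (1 / (2*(v₀:ℝ)) - 1 / (2*s)) * Cn n) atTop
      (nhds (c₀ - (1 / (2*s)) * EX 𝒳 (fun t => (η₀ t - α - β₁ * t - β₂ * t ^ 2) ^ 2)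
        - (1/s) * 0 + (1 / (2*(v₀:ℝ)) - 1 / (2*s)) * (v₀:ℝ))) := by
    exact ((tendsto_const_nhds.sub (hA.const_mul _)).sub (hBω.const_mul _)).add
      (hCω.const_mul _)
  -- identify the limit
  have hc₀ : c₀ = -(1/2) * Real.log (s / (v₀:ℝ)) := by
    rw [hc₀def, Real.log_inv, Real.log_inv,
      Real.log_sqrt (by positivity), Real.log_sqrt (by positivity),
      Real.log_mul (by positivity) hs.ne', Real.log_mul (by positivity) hv₀pos.ne',
      Real.log_div hs.ne' hv₀pos.ne']
    ring
  have hlimit : c₀ - (1 / (2*s)) * EX 𝒳 (fun t => (η₀ t - α - β₁ * t - β₂ * t ^ 2) ^ 2)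
      - (1/s) * 0 + (1 / (2*(v₀:ℝ)) - 1 / (2*s)) * (v₀:ℝ)
      = -hQuad 𝒳 η₀ (v₀:ℝ) α β₁ β₂ s := by
    rw [hc₀]
    unfold hQuad
    generalize EX 𝒳 (fun t => (η₀ t - α - β₁ * t - β₂ * t ^ 2) ^ 2) = E
    field_simp
    ring
  rw [hlimit] at hF
  -- eventual equality of the two sequences
  refine hF.congr' ?_
  filter_upwards [eventually_ge_atTop 1] with n hn1
  have hnne : (n:ℝ) ≠ 0 := by
    have : (0:ℝ) < n := by exact_mod_cast hn1
    exact this.ne'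
  have hlogprod : Real.log (∏ i ∈ Finset.Icc 1 n,
      normalPdf (y i ω) (α + β₁ * x i + β₂ * x i ^ 2) s /
        normalPdf (y i ω) (η₀ (x i)) (v₀:ℝ))
      = ∑ i ∈ Finset.Icc 1 n, Real.log (normalPdf (y i ω) (α + β₁ * x i + β₂ * x i ^ 2) s /
        normalPdf (y i ω) (η₀ (x i)) (v₀:ℝ)) :=
    Real.log_prod (fun i _ => (div_pos (hpos1 i) (hpos2 i)).ne')
  have hsum : ∑ i ∈ Finset.Icc 1 n, Real.log (normalPdf (y i ω) (α + β₁ * x i + β₂ * x i ^ 2) s /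
        normalPdf (y i ω) (η₀ (x i)) (v₀:ℝ))
      = (n:ℝ) * c₀
        - (1 / (2*s)) * ∑ i ∈ Finset.Icc 1 n, (η₀ (x i) - α - β₁ * x i - β₂ * x i ^ 2) ^ 2
        - (1/s) * ∑ i ∈ Finset.Icc 1 n, d i * ε i ω
        + (1 / (2*(v₀:ℝ)) - 1 / (2*s)) * ∑ i ∈ Finset.Icc 1 n, (ε i ω) ^ 2 := by
    rw [Finset.sum_congr rfl (fun i _ => hterm i)]
    rw [Finset.sum_add_distrib, Finset.sum_sub_distrib, Finset.sum_sub_distrib,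
      Finset.sum_const, Nat.card_Icc, ← Finset.mul_sum, ← Finset.mul_sum, ← Finset.mul_sum]
    simp only [Nat.add_sub_cancel, nsmul_eq_mul]
  show c₀ - (1 / (2*s)) * An n - (1/s) * Bn n + (1 / (2*(v₀:ℝ)) - 1 / (2*s)) * Cn n
      = (1 / (n:ℝ)) * Real.log (∏ i ∈ Finset.Icc 1 n,
        normalPdf (y i ω) (α + β₁ * x i + β₂ * x i ^ 2) s /
          normalPdf (y i ω) (η₀ (x i)) (v₀:ℝ))
  rw [hlogprod, hsum, hAn, hBn, hCn]
  beta_reduce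
  generalize (∑ i ∈ Finset.Icc 1 n, (η₀ (x i) - α - β₁ * x i - β₂ * x i ^ 2) ^ 2) = S
  field_simp
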